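/- The images {f_i + U : i ∈ D_L} form a basis of the quotient space V/U; in particular dim_k(V/U) = |D_L|. -/

import Mathlib

/-- The images `{f i + U : i ∈ D_L}` form a basis of the quotient space `V/U`;
in particular `dim (V/U) = |D_L|`. -/
theorem quotient_basis {k V ι : Type*} [Field k] [AddCommGroup V] [Module k V]
    [Fintype ι] [LinearOrder ι]
    (f : Module.Basis ι k V) (U : Submodule k V)
    (DL DQ : Set ι)
    (hDL : DL = {i : ι | f i ∉ U ⊔ Submodule.span k (f '' {j : ι | j < i})})
    (hDQ : DQ = DLᶜ) :
    LinearIndependent k (fun i : DL => U.mkQ (f i)) ∧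
    Submodule.span k (U.mkQ '' (f '' DL)) = ⊤ ∧
    Module.finrank k (V ⧸ U) = DL.ncard := by
  classical
  haveI : Fintype ↥DL := Fintype.ofFinite _
  -- Linear independence
  have hli : LinearIndependent k (fun i : DL => U.mkQ (f i)) := by
    rw [Fintype.linearIndependent_iff]
    intro g hg
    have hv : (∑ i : DL, g i • f i) ∈ U := by
      rw [← Submodule.ker_mkQ U, LinearMap.mem_ker, map_sum]
      simpa using hg
    intro i
    by_contra hgi
    set S : Finset ↥DL := Finset.univ.filter (fun j => g j ≠ 0) with hS
    have hiS : i ∈ S := by simp [hS, hgi]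
    have hs : S.Nonempty := ⟨i, hiS⟩
    set m := S.max' hs with hm'
    have hm : g m ≠ 0 := by
      have := S.max'_mem hs
      simp [hS] at this; exact this
    have hsum : (∑ j : DL, g j • f j)
        = g m • f ↑m + ∑ j ∈ Finset.univ.erase m, g j • f j :=
      (Finset.add_sum_erase _ _ (Finset.mem_univ m)).symm
    set W := U ⊔ Submodule.span k (f '' {j : ι | j < (m : ι)}) with hW
    have hrest : (∑ j ∈ Finset.univ.erase m, g j • f j) ∈ W := by
      refine Submodule.sum_mem _ ?_
      intro j hj
      by_cases hgj : g j = 0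
      · simp [hgj]
      · have hjS : j ∈ S := by simp [hS, hgj]
        have hjm : j ≠ m := (Finset.mem_erase.mp hj).1
        have hjlt : (j : ι) < (m : ι) := by
          have := S.le_max' j hjS
          exact lt_of_le_of_ne (Subtype.coe_le_coe.mpr this)
            (fun h => hjm (Subtype.coe_injective h))
        refine Submodule.smul_mem _ _ (Submodule.mem_sup_right ?_)
        exact Submodule.subset_span ⟨(j : ι), hjlt, rfl⟩
    have hfm : f ↑m ∈ W := by
      have heq : f ↑m = (g m)⁻¹ •
          ((∑ j : DL, g j • f j) - ∑ j ∈ Finset.univ.erase m, g j • f j) := by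
        rw [hsum, add_sub_cancel_right, smul_smul, inv_mul_cancel₀ hm, one_smul]
      rw [heq]
      exact Submodule.smul_mem _ _
        (Submodule.sub_mem _ (Submodule.mem_sup_left hv) hrest)
    exact (hDL.le m.2) hfm
  -- Spanning
  have key : ∀ i : ι, f i ∈ U ⊔ Submodule.span k (f '' DL) := by
    intro i
    induction i using WellFoundedLT.induction with
    | _ i ih =>
      by_cases hi : i ∈ DL
      · exact Submodule.mem_sup_right (Submodule.subset_span ⟨i, hi, rfl⟩)
      · rw [hDL, Set.mem_setOf_eq, not_not] at hi
        refine (?_ : U ⊔ Submodule.span k (f '' {j : ι | j < i})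
            ≤ U ⊔ Submodule.span k (f '' DL)) hi
        refine sup_le le_sup_left ?_
        rw [Submodule.span_le]
        rintro _ ⟨j, hj, rfl⟩
        exact ih j hj
  have hspan : U ⊔ Submodule.span k (f '' DL) = ⊤ := by
    rw [eq_top_iff, ← f.span_eq, Submodule.span_le]
    rintro _ ⟨i, rfl⟩
    exact key i
  have hspanQ : Submodule.span k (U.mkQ '' (f '' DL)) = ⊤ := by
    have h := congrArg (Submodule.map U.mkQ) hspan
    rwa [Submodule.map_sup, Submodule.map_span, Submodule.map_top,
      Submodule.range_mkQ, Submodule.mkQ_map_self, bot_sup_eq] at h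
  refine ⟨hli, hspanQ, ?_⟩
  have hrange : Set.range (fun i : DL => U.mkQ (f i)) = U.mkQ '' (f '' DL) := by
    rw [Set.image_image]
    ext x
    simp [Set.range, Set.mem_image]
  have hsp : ⊤ ≤ Submodule.span k (Set.range (fun i : DL => U.mkQ (f i))) := by
    rw [hrange, hspanQ]
  let b : Module.Basis ↥DL k (V ⧸ U) := Module.Basis.mk hli hsp
  rw [Module.finrank_eq_card_basis b, ← Nat.card_coe_set_eq,
    Nat.card_eq_fintype_card]
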